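/- Let v₁, v₂, v₃ be nonzero real numbers and V₁, V₂, V₃ real numbers satisfying v₁V₁ − v₂V₂ + v₃V₃ = 0 and V₁/v₁ + V₂/v₂ + V₃/v₃ = 0. Then for every choice of pairwise distinct indices i, j, k ∈ {1,2,3}: vᵢ(δⱼvⱼ² − δₖvₖ²)Vⱼ + vⱼ(δᵢvᵢ² − δₖvₖ²)Vᵢ = 0. -/
import Mathlib


/-- δ₁ = 1, δ₂ = −1, δ₃ = 1 (indices 0,1,2 in `Fin 3`). -/
noncomputable def delta : Fin 3 → ℝ := ![1, -1, 1]

/-- If v₁V₁ − v₂V₂ + v₃V₃ = 0 and V₁/v₁ + V₂/v₂ + V₃/v₃ = 0 with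
vᵢ ≠ 0, then for all pairwise distinct i,j,k:
vᵢ(δⱼvⱼ² − δₖvₖ²)Vⱼ + vⱼ(δᵢvᵢ² − δₖvₖ²)Vᵢ = 0. -/
theorem stmt_1 (v V : Fin 3 → ℝ) (hv : ∀ i, v i ≠ 0)
    (h1 : v 0 * V 0 - v 1 * V 1 + v 2 * V 2 = 0)
    (h2 : V 0 / v 0 + V 1 / v 1 + V 2 / v 2 = 0) :
    ∀ i j k : Fin 3, i ≠ j → j ≠ k → i ≠ k →
      v i * (delta j * (v j) ^ 2 - delta k * (v k) ^ 2) * V j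
        + v j * (delta i * (v i) ^ 2 - delta k * (v k) ^ 2) * V i = 0 := by
  have h0 := hv 0
  have hb := hv 1
  have hc := hv 2
  have h2' : V 0 * (v 1 * v 2) + V 1 * (v 0 * v 2) + V 2 * (v 0 * v 1) = 0 := by
    field_simp at h2
    linarith [h2]
  intro i j k hij hjk hik
  fin_cases i <;> fin_cases j <;> fin_cases k <;>
    simp_all [delta] <;>
    first
    | linear_combination v 0 * v 1 * h1 - v 2 * h2'
    | linear_combination v 0 * v 2 * h1 + v 1 * h2'
    | linear_combination v 1 * v 2 * h1 - v 0 * h2'
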